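/- Let a countable amenable discrete group Γ act on a compact metrizable group X by continuous automorphisms, and let x ∈ X be such that Σ_{s∈Γ} ρ(sx, e_X) < ∞ for some compatible translation-invariant metric ρ on X. Then x ∈ IE(X), i.e. (x, e_X) is an IE-pair. -/

import Mathlib

/-!
STATEMENT 16: For an action of a countable amenable group `Γ` on a compact metrizable
group `X` by continuous automorphisms, any point `x` with `∑_{s ∈ Γ} ρ(sx, e_X) < ∞` for
some compatible translation-invariant metric `ρ` is an IE-point.
-/

open Topology
open scoped Pointwise

namespace Stmt16

variable {Γ : Type*} [Group Γ] [DecidableEq Γ]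

/-- The Følner condition, characterizing amenability of a countable discrete group. -/
def IsFolner (Γ : Type*) [Group Γ] [DecidableEq Γ] : Prop :=
  ∀ K : Finset Γ, ∀ ε : ℝ, 0 < ε →
    ∃ F : Finset Γ, F.Nonempty ∧ (((K * F) \ F).card : ℝ) ≤ ε * F.card

variable {X : Type*} [TopologicalSpace X] [MulAction Γ X]

/-- `F` is an independence set for the pair `(U₁, U₂)`. -/
def IsIndep (F : Finset Γ) (U₁ U₂ : Set X) : Prop :=
  ∀ σ : Γ → Bool, ∃ z : X, ∀ s ∈ F, s • z ∈ (if σ s then U₁ else U₂)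

/-- `(x₁, x₂)` is an IE-pair. -/
def IsIEPair (x₁ x₂ : X) : Prop :=
  ∀ U₁ ∈ 𝓝 x₁, ∀ U₂ ∈ 𝓝 x₂,
    ∃ K : Finset Γ, K.Nonempty ∧ ∃ c : ℝ, 0 < c ∧ ∃ ε : ℝ, 0 < ε ∧
      ∀ F : Finset Γ, (((K * F) \ F).card : ℝ) ≤ ε * F.card →
        ∃ F' : Finset Γ, F' ⊆ F ∧ c * F.card ≤ F'.card ∧ IsIndep F' U₁ U₂

end Stmt16

/-- Greedy extraction of an `E`-separated subset of proportional size. -/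
theorem stmt16_greedy {Γ : Type*} [Group Γ] [DecidableEq Γ] (E : Finset Γ)
    (h1 : (1 : Γ) ∈ E) (hEsymm : ∀ a ∈ E, a⁻¹ ∈ E) (F : Finset Γ) :
    ∃ F' : Finset Γ, F' ⊆ F ∧ F.card ≤ E.card * F'.card ∧
      ∀ s ∈ F', ∀ t ∈ F', s ≠ t → t * s⁻¹ ∉ E := by
  induction F using Finset.strongInduction with
  | _ F ih =>
    rcases F.eq_empty_or_nonempty with rfl | ⟨t, ht⟩
    · exact ⟨∅, Finset.Subset.refl _, by simp, by simp⟩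
    · set S : Finset Γ := E * {t} with hS
      have htS : t ∈ S := by
        rw [hS, Finset.mem_mul]
        exact ⟨1, h1, t, Finset.mem_singleton_self t, one_mul t⟩
      have hsub : F \ S ⊂ F := by
        refine (Finset.ssubset_iff_of_subset Finset.sdiff_subset).mpr ⟨t, ht, ?_⟩
        simp [htS]
      obtain ⟨F'', hF''sub, hF''card, hF''sep⟩ := ih (F \ S) hsub
      have htF'' : t ∉ F'' := fun h => (Finset.mem_sdiff.mp (hF''sub h)).2 htS
      have hmemS : ∀ a : Γ, a * t⁻¹ ∈ E → a ∈ S := by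
        intro a ha
        rw [hS, Finset.mem_mul]
        exact ⟨a * t⁻¹, ha, t, Finset.mem_singleton_self t, by group⟩
      refine ⟨insert t F'', ?_, ?_, ?_⟩
      · intro a ha
        rcases Finset.mem_insert.mp ha with rfl | h
        · exact ht
        · exact (Finset.mem_sdiff.mp (hF''sub h)).1
      · rw [Finset.card_insert_of_notMem htF'', Nat.mul_succ]
        have h2 : (F ∩ S).card ≤ E.card := by
          calc (F ∩ S).card ≤ S.card := Finset.card_le_card (Finset.inter_subset_right)
          _ ≤ E.card * ({t} : Finset Γ).card := Finset.card_mul_le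
          _ = E.card := by simp
        have h3 : (F ∩ S).card + (F \ S).card = F.card := Finset.card_inter_add_card_sdiff F S
        omega
      · intro s hs t' ht' hne
        rcases Finset.mem_insert.mp hs with rfl | hs' <;>
          rcases Finset.mem_insert.mp ht' with rfl | ht''
        · exact absurd rfl hne
        · -- s = t, t' ∈ F'': goal t' * t⁻¹ ∉ E
          intro hmem
          exact (Finset.mem_sdiff.mp (hF''sub ht'')).2 (hmemS _ hmem)
        · -- s ∈ F'', t' = t: goal t * s⁻¹ ∉ E
          intro hmem
          have h' := hEsymm _ hmem
          rw [mul_inv_rev, inv_inv] at h'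
          exact (Finset.mem_sdiff.mp (hF''sub hs')).2 (hmemS _ h')
        · exact hF''sep s hs' t' ht'' hne

open Stmt16 in
theorem stmt16 {Γ : Type*} [Group Γ] [Countable Γ] [DecidableEq Γ]
    {X : Type*} [Group X] [TopologicalSpace X] [IsTopologicalGroup X] [CompactSpace X]
    [TopologicalSpace.MetrizableSpace X]
    [MulDistribMulAction Γ X]
    (hamen : IsFolner Γ)
    (hcont : ∀ s : Γ, Continuous fun x : X => s • x)
    -- a compatible translation-invariant metric `d` on `X`
    (d : X → X → ℝ)
    (hsymm : ∀ x y : X, d x y = d y x)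
    (hzero : ∀ x y : X, d x y = 0 ↔ x = y)
    (htri : ∀ x y z : X, d x z ≤ d x y + d y z)
    (hinvl : ∀ x y z : X, d (z * x) (z * y) = d x y)
    (hinvr : ∀ x y z : X, d (x * z) (y * z) = d x y)
    (hcompat : ∀ (x : X) (U : Set X), U ∈ 𝓝 x ↔ ∃ ε : ℝ, 0 < ε ∧ ∀ y : X, d x y < ε → y ∈ U)
    (x : X) (hsum : Summable fun s : Γ => d (s • x) 1) :
    -- `x ∈ IE(X)`, i.e. `(x, e_X)` is an IE-pair
    IsIEPair (Γ := Γ) x (1 : X) := by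
  -- nonnegativity of `d`
  have hd0 : ∀ a b : X, 0 ≤ d a b := by
    intro a b
    have h1 : d a a = 0 := (hzero a a).mpr rfl
    have h2 := htri a b a
    have h3 := hsymm a b
    linarith
  -- Lemma A: distance of a list product to 1
  have lemA : ∀ l : List X, d l.prod 1 ≤ (l.map (fun a => d a 1)).sum := by
    intro l
    induction l with
    | nil => simp [(hzero (1 : X) 1).mpr rfl]
    | cons a l ih =>
      simp only [List.prod_cons, List.map_cons, List.sum_cons]
      calc d (a * l.prod) 1 ≤ d (a * l.prod) (a * 1) + d (a * 1) 1 := htri _ _ _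
        _ = d l.prod 1 + d a 1 := by rw [hinvl, mul_one]
        _ ≤ d a 1 + (l.map (fun a => d a 1)).sum := by linarith
  -- Lemma B: distance of a list product to a middle element
  have lemB : ∀ (l₁ l₂ : List X) (w : X),
      d ((l₁ ++ w :: l₂).prod) w ≤ ((l₁ ++ l₂).map (fun a => d a 1)).sum := by
    intro l₁ l₂ w
    have hprod : (l₁ ++ w :: l₂).prod = l₁.prod * (w * l₂.prod) := by
      rw [List.prod_append, List.prod_cons]
    rw [hprod]
    have e1 : d (l₁.prod * (w * l₂.prod)) (w * l₂.prod) = d l₁.prod 1 := by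
      have := hinvr l₁.prod 1 (w * l₂.prod)
      rwa [one_mul] at this
    have e2 : d (w * l₂.prod) w = d l₂.prod 1 := by
      have := hinvl l₂.prod 1 w
      rwa [mul_one] at this
    calc d (l₁.prod * (w * l₂.prod)) w
        ≤ d (l₁.prod * (w * l₂.prod)) (w * l₂.prod) + d (w * l₂.prod) w := htri _ _ _
      _ = d l₁.prod 1 + d l₂.prod 1 := by rw [e1, e2]
      _ ≤ (l₁.map (fun a => d a 1)).sum + (l₂.map (fun a => d a 1)).sum := by
          have := lemA l₁; have := lemA l₂; linarith
      _ = ((l₁ ++ l₂).map (fun a => d a 1)).sum := by rw [List.map_append, List.sum_append]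
  intro U₁ hU₁ U₂ hU₂
  obtain ⟨δ₁, hδ₁pos, hδ₁⟩ := (hcompat x U₁).mp hU₁
  obtain ⟨δ₂, hδ₂pos, hδ₂⟩ := (hcompat 1 U₂).mp hU₂
  set δ : ℝ := min δ₁ δ₂ with hδdef
  have hδpos : 0 < δ := lt_min hδ₁pos hδ₂pos
  -- tail of the summable series
  have hball : Metric.ball (0 : ℝ) δ ∈ 𝓝 (0 : ℝ) := Metric.ball_mem_nhds 0 hδpos
  obtain ⟨E₀, hE₀⟩ := hsum.vanishing hball
  -- symmetrized finite set
  set E : Finset Γ := insert 1 (E₀ ∪ E₀⁻¹) with hEdef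
  have h1E : (1 : Γ) ∈ E := Finset.mem_insert_self _ _
  have hEsymm : ∀ a ∈ E, a⁻¹ ∈ E := by
    intro a ha
    rcases Finset.mem_insert.mp ha with rfl | ha'
    · simpa using h1E
    · rcases Finset.mem_union.mp ha' with h | h
      · exact Finset.mem_insert_of_mem (Finset.mem_union_right _ (by simpa using h))
      · exact Finset.mem_insert_of_mem (Finset.mem_union_left _ (by simpa using h))
  have hE₀E : E₀ ⊆ E := fun a ha =>
    Finset.mem_insert_of_mem (Finset.mem_union_left _ ha)
  have hEcard : 0 < E.card := Finset.card_pos.mpr ⟨1, h1E⟩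
  -- small sums over sets disjoint from E
  have hsmall : ∀ G : Finset Γ, (∀ g ∈ G, g ∉ E) → (∑ g ∈ G, d (g • x) 1) < δ := by
    intro G hG
    have hdisj : Disjoint G E₀ := by
      rw [Finset.disjoint_left]
      intro a haG haE₀
      exact hG a haG (hE₀E haE₀)
    have := hE₀ G hdisj
    rw [Metric.mem_ball, Real.dist_eq, sub_zero] at this
    exact lt_of_le_of_lt (le_abs_self _) this
  refine ⟨{1}, Finset.singleton_nonempty 1, (E.card : ℝ)⁻¹, by positivity, 1, one_pos, ?_⟩
  intro F _
  obtain ⟨F', hF'sub, hF'card, hF'sep⟩ := stmt16_greedy E h1E hEsymm F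
  refine ⟨F', hF'sub, ?_, ?_⟩
  · -- cardinality bound
    have h1 : (F.card : ℝ) ≤ (E.card : ℝ) * F'.card := by exact_mod_cast hF'card
    rw [inv_mul_le_iff₀ (by exact_mod_cast hEcard)]
    linarith
  · -- independence
    intro σ
    classical
    set l : List Γ := F'.toList.filter (fun s => σ s) with hldef
    have hlnodup : l.Nodup := (F'.nodup_toList).filter _
    have hlmem : ∀ s ∈ l, s ∈ F' ∧ σ s = true := by
      intro s hs
      have := List.mem_filter.mp hs
      exact ⟨Finset.mem_toList.mp this.1, this.2⟩
    set z : X := (l.map (fun s => s⁻¹ • x)).prod with hzdef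
    refine ⟨z, ?_⟩
    intro t htF'
    -- compute t • z
    have hsmulz : t • z = (l.map (fun s => (t * s⁻¹) • x)).prod := by
      rw [hzdef, List.smul_prod', List.map_map]
      congr 1
      apply List.map_congr_left
      intro s _
      simp [mul_smul]
    -- key: sums over `E`-separated elements are small
    have hkey : ∀ L : List Γ, L.Nodup → (∀ s ∈ L, s ∈ F' ∧ s ≠ t) →
        (L.map (fun s => d ((t * s⁻¹) • x) 1)).sum < δ := by
      intro L hLnodup hLmem
      have hinj : Function.Injective (fun s : Γ => t * s⁻¹) := by
        intro a b hab
        simpa using hab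
      have hLnodup' : (L.map (fun s => t * s⁻¹)).Nodup := hLnodup.map hinj
      have hsum_eq : (L.map (fun s => d ((t * s⁻¹) • x) 1)).sum
          = ∑ g ∈ (L.map (fun s => t * s⁻¹)).toFinset, d (g • x) 1 := by
        rw [List.sum_toFinset _ hLnodup', List.map_map]
        rfl
      rw [hsum_eq]
      apply hsmall
      intro g hg
      rw [List.mem_toFinset, List.mem_map] at hg
      obtain ⟨s, hsL, rfl⟩ := hg
      obtain ⟨hsF', hst⟩ := hLmem s hsL
      exact hF'sep s hsF' t htF' hst
    by_cases hσt : σ t = true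
    · -- t ∈ l; t • z is close to x
      have htl : t ∈ l := by
        rw [hldef, List.mem_filter]
        exact ⟨Finset.mem_toList.mpr htF', hσt⟩
      obtain ⟨l₁, l₂, hl⟩ := List.append_of_mem htl
      have hnodup2 : t ∉ l₁ ++ l₂ ∧ (l₁ ++ l₂).Nodup := by
        have := hlnodup
        rw [hl, List.nodup_middle, List.nodup_cons] at this
        exact this
      have hmap : l.map (fun s => (t * s⁻¹) • x)
          = (l₁.map (fun s => (t * s⁻¹) • x)) ++ x :: (l₂.map (fun s => (t * s⁻¹) • x)) := by
        rw [hl]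
        simp [mul_inv_cancel, one_smul]
      have hbound : d (t • z) x
          ≤ ((l₁ ++ l₂).map (fun s => d ((t * s⁻¹) • x) 1)).sum := by
        rw [hsmulz, hmap]
        have := lemB (l₁.map (fun s => (t * s⁻¹) • x)) (l₂.map (fun s => (t * s⁻¹) • x)) x
        calc d ((l₁.map (fun s => (t * s⁻¹) • x)) ++ x :: (l₂.map (fun s => (t * s⁻¹) • x))).prod x
            ≤ ((l₁.map (fun s => (t * s⁻¹) • x) ++ l₂.map (fun s => (t * s⁻¹) • x)).map
                (fun a => d a 1)).sum := this
          _ = ((l₁ ++ l₂).map (fun s => d ((t * s⁻¹) • x) 1)).sum := by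
              rw [← List.map_append, List.map_map]; rfl
      have hmem12 : ∀ s ∈ l₁ ++ l₂, s ∈ F' ∧ s ≠ t := by
        intro s hs
        have hsl : s ∈ l := by
          rw [hl]
          rcases List.mem_append.mp hs with h | h
          · exact List.mem_append.mpr (Or.inl h)
          · exact List.mem_append.mpr (Or.inr (List.mem_cons_of_mem _ h))
        refine ⟨(hlmem s hsl).1, ?_⟩
        rintro rfl
        exact hnodup2.1 hs
      have hlt : d (t • z) x < δ := lt_of_le_of_lt hbound (hkey _ hnodup2.2 hmem12)
      have : t • z ∈ U₁ := by
        apply hδ₁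
        rw [hsymm]
        exact lt_of_lt_of_le hlt (min_le_left _ _)
      simpa [hσt] using this
    · -- t ∉ l; t • z is close to 1
      have htl : t ∉ l := by
        intro h
        exact hσt (hlmem t h).2
      have hbound : d (t • z) 1 ≤ (l.map (fun s => d ((t * s⁻¹) • x) 1)).sum := by
        rw [hsmulz]
        have := lemA (l.map (fun s => (t * s⁻¹) • x))
        calc d (l.map (fun s => (t * s⁻¹) • x)).prod 1
            ≤ ((l.map (fun s => (t * s⁻¹) • x)).map (fun a => d a 1)).sum := this
          _ = (l.map (fun s => d ((t * s⁻¹) • x) 1)).sum := by rw [List.map_map]; rfl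
      have hmem' : ∀ s ∈ l, s ∈ F' ∧ s ≠ t := by
        intro s hs
        refine ⟨(hlmem s hs).1, ?_⟩
        rintro rfl
        exact htl hs
      have hlt : d (t • z) 1 < δ := lt_of_le_of_lt hbound (hkey _ hlnodup hmem')
      have : t • z ∈ U₂ := by
        apply hδ₂
        rw [hsymm]
        exact lt_of_lt_of_le hlt (min_le_right _ _)
      simpa [hσt] using this
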